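/- Let a, b be real numbers with b ≠ 0 and |4a³/(27b²)| > 1 (in particular a ≠ 0). Then the series α = (-b/a)·Σ_{n≥0} (1/(2n+1))·C(3n, n)·(-b²/a³)ⁿ converges and its sum satisfies α³ + aα + b = 0. Moreover, if 4a³/(27b²) > 1 then α is the unique real root of x³ + ax + b, and otherwise α is the unique root of x³ + ax + b satisfying |b/a| < |α| < (3/2)|b/a|. -/

import Mathlib

set_option maxHeartbeats 1000000

open Finset

/-- `Bq m r = C(3m+r, m)` as a real number. -/
noncomputable def Bq (m r : ℕ) : ℝ := (Nat.choose (3*m+r) m : ℝ)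

/-- `Aq k r` : generalized Fuss-Catalan `A_3(k,r) = r/(3k+r) C(3k+r,k)` in polynomial form. -/
noncomputable def Aq : ℕ → ℕ → ℝ
  | 0, _ => 1
  | (k+1), r => Bq (k+1) r - 3 * Bq k (r+2)

lemma Bq_zero (r : ℕ) : Bq 0 r = 1 := by simp [Bq]

lemma pascalB (m r : ℕ) : Bq (m+1) (r+1) = Bq (m+1) r + Bq m (r+3) := by
  have h1 : 3*(m+1)+(r+1) = (3*(m+1)+r)+1 := by ring
  have h2 : 3*(m+1)+r = 3*m+(r+3) := by ring
  unfold Bq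
  rw [h1, Nat.choose_succ_succ (3*(m+1)+r) m, h2]
  push_cast
  ring

lemma pascalA (k r : ℕ) : Aq (k+1) (r+1) = Aq (k+1) r + Aq k (r+3) := by
  cases k with
  | zero =>
    simp only [Aq, Bq_zero]
    have := pascalB 0 r
    rw [Bq_zero] at this
    rw [this]
    ring
  | succ k =>
    simp only [Aq]
    have p1 : Bq (k+1+1) (r+1) = Bq (k+1+1) r + Bq (k+1) (r+3) := pascalB (k+1) r
    have p3 : Bq (k+1) (r+3) = Bq (k+1) (r+2) + Bq k (r+5) := by
      have := pascalB k (r+2)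
      convert this using 3 <;> ring
    rw [p1, p3]
    ring

lemma Aq_zero_right (k : ℕ) : Aq (k+1) 0 = 0 := by
  have h := Nat.add_one_mul_choose_eq (3*k+2) k
  -- (3k+3) * C(3k+2, k) = C(3k+3, k+1) * (k+1)
  simp only [Aq, Bq]
  have h3 : 3*(k+1)+0 = 3*k+2+1 := by ring
  rw [h3]
  have hc : ((3*k+2+1 : ℕ) : ℝ) * ((3*k+2).choose k : ℝ) = ((3*k+2+1).choose (k+1) : ℝ) * ((k+1 : ℕ) : ℝ) := by
    exact_mod_cast congrArg Nat.cast h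
  have hk : ((k:ℝ)+1) ≠ 0 := by positivity
  push_cast at hc ⊢
  have h4 : (3*(k:ℝ)+2+1) = 3*((k:ℝ)+1) := by ring
  nlinarith [hc]

/-- partial Rothe sum -/
noncomputable def Sq (n x y : ℕ) : ℝ := ∑ k ∈ Finset.range (n+1), Aq k x * Bq (n-k) y

lemma Sq_zero (x y : ℕ) : Sq 0 x y = 1 := by
  simp [Sq, Aq, Bq_zero]

lemma Sq_rec_y (n x y : ℕ) : Sq (n+1) x (y+1) = Sq (n+1) x y + Sq n x (y+3) := by
  unfold Sq
  rw [Finset.sum_range_succ (fun k => Aq k x * Bq (n+1-k) (y+1)) (n+1),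
      Finset.sum_range_succ (fun k => Aq k x * Bq (n+1-k) y) (n+1)]
  simp only [Nat.sub_self, Bq_zero, mul_one]
  have key : ∑ k ∈ Finset.range (n+1), Aq k x * Bq (n+1-k) (y+1)
      = ∑ k ∈ Finset.range (n+1), (Aq k x * Bq (n+1-k) y + Aq k x * Bq (n-k) (y+3)) := by
    apply Finset.sum_congr rfl
    intro k hk
    have hk' : k ≤ n := Nat.lt_succ_iff.mp (Finset.mem_range.mp hk)
    have h1 : n + 1 - k = (n - k) + 1 := by omega
    rw [h1, pascalB (n-k) y]
    ring
  rw [key, Finset.sum_add_distrib]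
  ring

lemma Sq_rec_x (n x y : ℕ) : Sq (n+1) (x+1) y = Sq (n+1) x y + Sq n (x+3) y := by
  unfold Sq
  rw [Finset.sum_range_succ' (fun k => Aq k (x+1) * Bq (n+1-k) y) (n+1),
      Finset.sum_range_succ' (fun k => Aq k x * Bq (n+1-k) y) (n+1)]
  simp only [Nat.sub_zero]
  have key : ∑ k ∈ Finset.range (n+1), Aq (k+1) (x+1) * Bq (n+1-(k+1)) y
      = ∑ k ∈ Finset.range (n+1), (Aq (k+1) x * Bq (n+1-(k+1)) y + Aq k (x+3) * Bq (n-k) y) := by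
    apply Finset.sum_congr rfl
    intro k _
    have h1 : n + 1 - (k + 1) = n - k := by omega
    rw [pascalA k x, h1]
    ring
  rw [key, Finset.sum_add_distrib]
  have ha : Aq 0 (x+1) = Aq 0 x := rfl
  rw [ha]
  ring

lemma Aq_one (r : ℕ) : Aq 0 r = 1 := rfl

lemma rothe1 : ∀ n x y : ℕ, Sq n x y = Bq n (x+y) := by
  intro n
  induction n using Nat.strong_induction_on with
  | _ n ih =>
    match n with
    | 0 => intro x y; rw [Sq_zero, Bq_zero]
    | (m+1) =>
      have hx0 : ∀ x, Sq (m+1) x 0 = Bq (m+1) x := by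
        intro x
        induction x with
        | zero =>
          unfold Sq
          rw [Finset.sum_eq_single 0]
          · simp [Aq, Bq]
          · intro k hk hk0
            obtain ⟨k', rfl⟩ := Nat.exists_eq_succ_of_ne_zero hk0
            rw [Aq_zero_right, zero_mul]
          · intro h; exact absurd (Finset.mem_range.mpr (Nat.succ_pos _)) h
        | succ x ihx =>
          rw [Sq_rec_x, ihx, ih m (Nat.lt_succ_self m) (x+3) 0]
          have := pascalB m x
          rw [Nat.add_zero, Nat.add_zero]
          rw [this]
      intro x y
      induction y with
      | zero => rw [Nat.add_zero]; exact hx0 x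
      | succ y ihy =>
        rw [Sq_rec_y, ihy, ih m (Nat.lt_succ_self m) x (y+3)]
        have := pascalB m (x+y)
        have e1 : x + (y+1) = (x+y)+1 := by ring
        have e2 : x + (y+3) = (x+y)+3 := by ring
        rw [e1, e2, this]

lemma rothe2 (n x y : ℕ) :
    ∑ k ∈ Finset.range (n+1), Aq k x * Aq (n-k) y = Aq n (x+y) := by
  cases n with
  | zero => simp [Aq]
  | succ m =>
    rw [Finset.sum_range_succ (fun k => Aq k x * Aq (m+1-k) y) (m+1)]
    have step : ∀ k ∈ Finset.range (m+1), Aq k x * Aq (m+1-k) y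
        = Aq k x * Bq (m+1-k) y - 3 * (Aq k x * Bq (m-k) (y+2)) := by
      intro k hk
      have hk' : k ≤ m := Nat.lt_succ_iff.mp (Finset.mem_range.mp hk)
      have h1 : m + 1 - k = (m - k) + 1 := by omega
      rw [h1]
      simp only [Aq]
      ring
    rw [Finset.sum_congr rfl step, Finset.sum_sub_distrib, ← Finset.mul_sum]
    have h2 : ∑ k ∈ Finset.range (m+1), Aq k x * Bq (m+1-k) y + Aq (m+1) x * Aq 0 y
        = Sq (m+1) x y := by
      unfold Sq
      rw [Finset.sum_range_succ (fun k => Aq k x * Bq (m+1-k) y) (m+1)]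
      simp [Aq, Bq_zero]
    have h3 : (∑ k ∈ Finset.range (m+1), Aq k x * Bq (m-k) (y+2)) = Sq m x (y+2) := rfl
    have goal2 : Sq (m+1) x y - 3 * Sq m x (y+2) = Aq (m+1) (x+y) := by
      rw [rothe1 (m+1) x y, rothe1 m x (y+2)]
      simp only [Aq]
      have e : x + (y+2) = (x+y)+2 := by ring
      rw [e]
    simp only [Nat.sub_self] at h2 ⊢
    rw [h3]
    linarith [goal2, h2]

/-- Fuss–Catalan number `C(3n,n)/(2n+1)` as a real. -/
noncomputable def fc (n : ℕ) : ℝ := (Nat.choose (3*n) n : ℝ) / (2*n+1)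

noncomputable def fd (n : ℕ) : ℝ := 2 * (Nat.choose (3*n+2) n : ℝ) / (3*n+2)

lemma fc_pos (n : ℕ) : 0 < fc n := by
  have h : 0 < Nat.choose (3*n) n := Nat.choose_pos (by omega)
  have h2 : (0:ℝ) < (Nat.choose (3*n) n : ℝ) := by exact_mod_cast h
  apply div_pos h2
  positivity

lemma fc_zero : fc 0 = 1 := by norm_num [fc]

lemma fc_one : fc 1 = 1 := by norm_num [fc]

lemma Aq_eq_fc (n : ℕ) : Aq n 1 = fc n := by
  cases n with
  | zero => simp [Aq, fc_zero]
  | succ k =>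
    simp only [Aq, Bq, fc]
    -- (k+1)-th: C(3k+4, k+1) - 3*C(3k+3, k) = C(3k+3, k+1)/(2k+3)
    have ha : ((3*k+4 : ℕ) : ℝ) * ((3*k+3).choose k : ℝ)
        = ((3*k+4).choose (k+1) : ℝ) * ((k+1 : ℕ) : ℝ) := by
      exact_mod_cast congrArg Nat.cast (Nat.add_one_mul_choose_eq (3*k+3) k)
    have hb : ((3*(k+1)).choose (k+1) : ℝ) * ((3*k+4 : ℕ) : ℝ)
        = ((3*k+4).choose (k+1) : ℝ) * ((2*k+3 : ℕ) : ℝ) := by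
      have := Nat.choose_mul_succ_eq (3*(k+1)) (k+1)
      have h1 : 3*(k+1)+1 = 3*k+4 := by omega
      rw [h1] at this
      have h2 : 3*k+4-(k+1) = 2*k+3 := by omega
      rw [h2] at this
      exact_mod_cast congrArg Nat.cast this
    have e1 : 3*(k+1)+1 = 3*k+4 := by omega
    have e2 : 3*k+(1+2) = 3*k+3 := by omega
    rw [e1, e2]
    push_cast at ha hb ⊢
    have d1 : (2*(k:ℝ)+3) ≠ 0 := by positivity
    have d2 : (3*(k:ℝ)+4) ≠ 0 := by positivity
    field_simp
    nlinarith [ha, hb]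

lemma Aq_eq_fd (n : ℕ) : Aq n 2 = fd n := by
  cases n with
  | zero => norm_num [Aq, fd]
  | succ k =>
    simp only [Aq, Bq, fd]
    have ha : ((3*k+5 : ℕ) : ℝ) * ((3*k+4).choose k : ℝ)
        = ((3*k+5).choose (k+1) : ℝ) * ((k+1 : ℕ) : ℝ) := by
      exact_mod_cast congrArg Nat.cast (Nat.add_one_mul_choose_eq (3*k+4) k)
    have e1 : 3*(k+1)+2 = 3*k+5 := by omega
    have e2 : 3*k+(2+2) = 3*k+4 := by omega
    rw [e1, e2]
    push_cast at ha ⊢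
    have d2 : (3*(k:ℝ)+5) ≠ 0 := by positivity
    field_simp
    nlinarith [ha]

lemma Aq_eq_fc_succ (n : ℕ) : Aq n 3 = fc (n+1) := by
  cases n with
  | zero => norm_num [Aq, fc]
  | succ k =>
    simp only [Aq, Bq, fc]
    have ha : ((3*k+6 : ℕ) : ℝ) * ((3*k+5).choose k : ℝ)
        = ((3*k+6).choose (k+1) : ℝ) * ((k+1 : ℕ) : ℝ) := by
      exact_mod_cast congrArg Nat.cast (Nat.add_one_mul_choose_eq (3*k+5) k)
    have hb : ((3*k+6).choose (k+2) : ℝ) * ((k+2 : ℕ) : ℝ)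
        = ((3*k+6).choose (k+1) : ℝ) * ((2*k+5 : ℕ) : ℝ) := by
      have := Nat.choose_succ_right_eq (3*k+6) (k+1)
      have h2 : 3*k+6-(k+1) = 2*k+5 := by omega
      rw [h2] at this
      exact_mod_cast congrArg Nat.cast this
    have e1 : 3*(k+1)+3 = 3*k+6 := by omega
    have e2 : 3*k+(3+2) = 3*k+5 := by omega
    have e3 : 3*(k+1+1) = 3*k+6 := by omega
    rw [e1, e2, e3]
    push_cast at ha hb ⊢
    have d1 : (2*((k:ℝ)+1)+1+2) ≠ 0 := by positivity
    field_simp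
    nlinarith [ha, hb]

lemma conv_fc_fc (n : ℕ) : ∑ i ∈ Finset.range (n+1), fc i * fc (n-i) = fd n := by
  have := rothe2 n 1 1
  simp only [Aq_eq_fc] at this
  rw [this, Aq_eq_fd]

lemma conv_fd_fc (n : ℕ) : ∑ i ∈ Finset.range (n+1), fd i * fc (n-i) = fc (n+1) := by
  have := rothe2 n 2 1
  have h2 : ∀ k, Aq k 2 = fd k := Aq_eq_fd
  have h1 : ∀ k, Aq k 1 = fc k := Aq_eq_fc
  simp only [h1, h2] at this
  rw [this, Aq_eq_fc_succ]

lemma choose3n_le (n : ℕ) : (Nat.choose (3*n) n : ℝ) ≤ (27/4)^n := by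
  induction n with
  | zero => norm_num
  | succ n ih =>
    have h1n := Nat.choose_mul_succ_eq (3*n) n
    have h2n := Nat.choose_mul_succ_eq (3*n+1) n
    have h3n := Nat.add_one_mul_choose_eq (3*n+2) n
    have e1 : 3*n+1-n = 2*n+1 := by omega
    have e2 : 3*n+1+1 = 3*n+2 := by omega
    have e3 : 3*n+1+1-n = 2*n+2 := by omega
    rw [e1] at h1n
    rw [e2, e3] at h2n
    have h1 : ((3*n).choose n : ℝ) * (3*n+1) = ((3*n+1).choose n : ℝ) * (2*n+1) := by
      exact_mod_cast congrArg Nat.cast h1n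
    have h2 : ((3*n+1).choose n : ℝ) * (3*n+2) = ((3*n+2).choose n : ℝ) * (2*n+2) := by
      exact_mod_cast congrArg Nat.cast h2n
    have h3 : ((3*n+2+1 : ℕ) : ℝ) * ((3*n+2).choose n : ℝ)
        = ((3*n+2+1).choose (n+1) : ℝ) * ((n+1 : ℕ) : ℝ) := by
      exact_mod_cast congrArg Nat.cast h3n
    have e4 : 3*(n+1) = 3*n+2+1 := by omega
    rw [e4]
    push_cast at h1 h2 h3 ⊢
    have key : ((3*n+2+1).choose (n+1) : ℝ) * ((n:ℝ)+1) * (2*(n:ℝ)+1) * (2*(n:ℝ)+2)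
        = ((3*n).choose n : ℝ) * (3*(n:ℝ)+1) * (3*(n:ℝ)+2) * (3*(n:ℝ)+3) := by
      push_cast at h3
      linear_combination (-((2*(n:ℝ)+1)*(2*(n:ℝ)+2)))*h3 - ((3*(n:ℝ)+3)*(2*(n:ℝ)+1))*h2
        - ((3*(n:ℝ)+3)*(3*(n:ℝ)+2))*h1
    have hq : (0:ℝ) ≤ (27/4:ℝ)^n := by positivity
    have hD : (0:ℝ) < ((n:ℝ)+1)*(2*(n:ℝ)+1)*(2*(n:ℝ)+2) := by positivity
    have hM : (3*(n:ℝ)+1)*(3*(n:ℝ)+2)*(3*(n:ℝ)+3)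
        ≤ 27/4*(((n:ℝ)+1)*(2*(n:ℝ)+1)*(2*(n:ℝ)+2)) := by nlinarith [(Nat.cast_nonneg n : (0:ℝ) ≤ (n:ℝ))]
    have step1 : ((3*n).choose n : ℝ) * ((3*(n:ℝ)+1)*(3*(n:ℝ)+2)*(3*(n:ℝ)+3))
        ≤ (27/4:ℝ)^n * ((3*(n:ℝ)+1)*(3*(n:ℝ)+2)*(3*(n:ℝ)+3)) :=
      mul_le_mul_of_nonneg_right ih (by positivity)
    have step2 : (27/4:ℝ)^n * ((3*(n:ℝ)+1)*(3*(n:ℝ)+2)*(3*(n:ℝ)+3))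
        ≤ (27/4:ℝ)^n * (27/4*(((n:ℝ)+1)*(2*(n:ℝ)+1)*(2*(n:ℝ)+2))) :=
      mul_le_mul_of_nonneg_left hM hq
    have main : ((3*n+2+1).choose (n+1) : ℝ) * (((n:ℝ)+1)*(2*(n:ℝ)+1)*(2*(n:ℝ)+2))
        ≤ (27/4:ℝ)^(n+1) * (((n:ℝ)+1)*(2*(n:ℝ)+1)*(2*(n:ℝ)+2)) := by
      have hkey2 : ((3*n+2+1).choose (n+1) : ℝ) * (((n:ℝ)+1)*(2*(n:ℝ)+1)*(2*(n:ℝ)+2))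
          = ((3*n).choose n : ℝ) * ((3*(n:ℝ)+1)*(3*(n:ℝ)+2)*(3*(n:ℝ)+3)) := by
        linear_combination key
      rw [hkey2, pow_succ]
      calc ((3*n).choose n : ℝ) * ((3*(n:ℝ)+1)*(3*(n:ℝ)+2)*(3*(n:ℝ)+3))
          ≤ (27/4:ℝ)^n * (27/4*(((n:ℝ)+1)*(2*(n:ℝ)+1)*(2*(n:ℝ)+2))) := le_trans step1 step2
        _ = (27/4:ℝ)^n * (27/4) * (((n:ℝ)+1)*(2*(n:ℝ)+1)*(2*(n:ℝ)+2)) := by ring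
    exact le_of_mul_le_mul_right main hD

lemma fc_le (n : ℕ) : fc n ≤ (27/4)^n := by
  have h := choose3n_le n
  have : fc n ≤ (Nat.choose (3*n) n : ℝ) := by
    rw [fc]
    apply div_le_self (by positivity)
    have hn : (0:ℝ) ≤ (n:ℝ) := Nat.cast_nonneg n
    linarith
  linarith

lemma summable_fc_norm {t : ℝ} (ht : |t| < 4/27) :
    Summable (fun n => ‖fc n * t^n‖) := by
  have hq0 : (0:ℝ) ≤ 27/4 * |t| := by positivity
  have hq1 : 27/4 * |t| < 1 := by nlinarith
  apply Summable.of_nonneg_of_le (fun n => norm_nonneg _)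
    (f := fun n => (27/4 * |t|)^n) ?_ (summable_geometric_of_lt_one hq0 hq1)
  intro n
  show ‖fc n * t^n‖ ≤ (27/4 * |t|)^n
  rw [norm_mul, norm_pow, mul_pow, Real.norm_eq_abs, Real.norm_eq_abs,
    abs_of_pos (fc_pos n)]
  apply mul_le_mul (fc_le n) le_rfl (by positivity) (by positivity)

lemma conv_pow (u v : ℕ → ℝ) (t : ℝ) (n : ℕ) :
    (∑ i ∈ Finset.range (n+1), u i * v (n-i)) * t^n
      = ∑ i ∈ Finset.range (n+1), (u i * t^i) * (v (n-i) * t^(n-i)) := by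
  rw [Finset.sum_mul]
  apply Finset.sum_congr rfl
  intro i hi
  have h : i + (n-i) = n := by
    have := Nat.lt_succ_iff.mp (Finset.mem_range.mp hi); omega
  have hp : t^i * t^(n-i) = t^n := by rw [← pow_add, h]
  rw [← hp]
  ring

lemma inner_fcfc {t : ℝ} (n : ℕ) :
    ∑ kl ∈ Finset.HasAntidiagonal.antidiagonal n, (fc kl.1 * t^kl.1) * (fc kl.2 * t^kl.2)
      = fd n * t^n := by
  rw [Finset.Nat.sum_antidiagonal_eq_sum_range_succ_mk, ← conv_fc_fc n, conv_pow]

lemma inner_fdfc {t : ℝ} (n : ℕ) :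
    ∑ kl ∈ Finset.HasAntidiagonal.antidiagonal n, (fd kl.1 * t^kl.1) * (fc kl.2 * t^kl.2)
      = fc (n+1) * t^n := by
  rw [Finset.Nat.sum_antidiagonal_eq_sum_range_succ_mk, ← conv_fd_fc n, conv_pow]

lemma fc_functional {t : ℝ} (ht : |t| < 4/27) :
    (∑' n, fc n * t^n) = 1 + t * (∑' n, fc n * t^n)^3 := by
  have hs := summable_fc_norm ht
  have hsum : Summable (fun n => fc n * t^n) := hs.of_norm
  have hdn : Summable (fun n => ‖fd n * t^n‖) := by
    have h := summable_norm_sum_mul_antidiagonal_of_summable_norm hs hs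
    apply h.congr
    intro n
    rw [inner_fcfc]
  have hff : (∑' n, fc n * t^n) * (∑' n, fc n * t^n) = ∑' n, fd n * t^n := by
    rw [tsum_mul_tsum_eq_tsum_sum_antidiagonal_of_summable_norm hs hs]
    exact tsum_congr inner_fcfc
  have hfff : (∑' n, fd n * t^n) * (∑' n, fc n * t^n) = ∑' n, fc (n+1) * t^n := by
    rw [tsum_mul_tsum_eq_tsum_sum_antidiagonal_of_summable_norm hdn hs]
    exact tsum_congr inner_fdfc
  have hshift : (∑' n, fc n * t^n) = 1 + t * ∑' n, fc (n+1) * t^n := by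
    rw [hsum.tsum_eq_zero_add]
    congr 1
    · simp [fc_zero]
    · rw [← tsum_mul_left]
      apply tsum_congr
      intro n
      rw [pow_succ]
      ring
  calc (∑' n, fc n * t^n) = 1 + t * ∑' n, fc (n+1) * t^n := hshift
    _ = 1 + t * (∑' n, fc n * t^n)^3 := by rw [← hfff, ← hff]; ring

lemma conv_le (a b : ℕ → ℝ) (ha : ∀ i, 0 ≤ a i) (hb : ∀ i, 0 ≤ b i) (N : ℕ) :
    ∑ n ∈ Finset.range N, ∑ i ∈ Finset.range (n+1), a i * b (n-i)
      ≤ (∑ i ∈ Finset.range N, a i) * (∑ j ∈ Finset.range N, b j) := by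
  have hrw : ∀ n, ∑ i ∈ Finset.range (n+1), a i * b (n-i)
      = ∑ p ∈ Finset.HasAntidiagonal.antidiagonal n, a p.1 * b p.2 := by
    intro n
    rw [Finset.Nat.sum_antidiagonal_eq_sum_range_succ_mk]
  simp only [hrw]
  rw [← Finset.sum_biUnion]
  · rw [Finset.sum_mul_sum]
    rw [← Finset.sum_product']
    apply Finset.sum_le_sum_of_subset_of_nonneg
    · intro p hp
      simp only [Finset.mem_biUnion, Finset.mem_range, Finset.HasAntidiagonal.mem_antidiagonal] at hp
      obtain ⟨n, hn, hpn⟩ := hp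
      simp only [Finset.mem_product, Finset.mem_range]
      omega
    · intro p _ _
      exact mul_nonneg (ha _) (hb _)
  · intro x hx y hy hxy
    apply Finset.disjoint_left.mpr
    intro p hpx hpy
    simp only [Finset.HasAntidiagonal.mem_antidiagonal] at hpx hpy
    exact hxy (by omega)

lemma fd_nonneg (n : ℕ) : 0 ≤ fd n := by
  rw [fd]
  positivity

lemma partial32 : ∀ N, ∑ n ∈ Finset.range N, fc n * (4/27:ℝ)^n ≤ 3/2 := by
  intro N
  induction N with
  | zero => norm_num
  | succ N ih =>
    have hfcnn : ∀ i:ℕ, (0:ℝ) ≤ fc i * (4/27:ℝ)^i :=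
      fun i => le_of_lt (mul_pos (fc_pos i) (by positivity))
    have hfdnn : ∀ i:ℕ, (0:ℝ) ≤ fd i * (4/27:ℝ)^i :=
      fun i => mul_nonneg (fd_nonneg i) (by positivity)
    have hPnn : 0 ≤ ∑ n ∈ Finset.range N, fc n * (4/27:ℝ)^n :=
      Finset.sum_nonneg (fun i _ => hfcnn i)
    have hQnn : 0 ≤ ∑ n ∈ Finset.range N, fd n * (4/27:ℝ)^n :=
      Finset.sum_nonneg (fun i _ => hfdnn i)
    have hd : ∑ n ∈ Finset.range N, fd n * (4/27:ℝ)^n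
        ≤ (∑ n ∈ Finset.range N, fc n * (4/27:ℝ)^n)^2 := by
      have e1 : ∑ n ∈ Finset.range N, fd n * (4/27:ℝ)^n
          = ∑ n ∈ Finset.range N, ∑ i ∈ Finset.range (n+1),
              (fc i * (4/27:ℝ)^i) * (fc (n-i) * (4/27:ℝ)^(n-i)) := by
        apply Finset.sum_congr rfl
        intro n _
        rw [← conv_pow, conv_fc_fc]
      rw [e1, sq]
      exact conv_le _ _ hfcnn hfcnn N
    have hc : ∑ n ∈ Finset.range N, fc (n+1) * (4/27:ℝ)^n
        ≤ (∑ n ∈ Finset.range N, fd n * (4/27:ℝ)^n)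
          * (∑ n ∈ Finset.range N, fc n * (4/27:ℝ)^n) := by
      have e1 : ∑ n ∈ Finset.range N, fc (n+1) * (4/27:ℝ)^n
          = ∑ n ∈ Finset.range N, ∑ i ∈ Finset.range (n+1),
              (fd i * (4/27:ℝ)^i) * (fc (n-i) * (4/27:ℝ)^(n-i)) := by
        apply Finset.sum_congr rfl
        intro n _
        rw [← conv_pow, conv_fd_fc]
      rw [e1]
      exact conv_le _ _ hfdnn hfcnn N
    rw [Finset.sum_range_succ' (fun n => fc n * (4/27:ℝ)^n) N]
    have e : ∀ n ∈ Finset.range N, fc (n+1) * (4/27:ℝ)^(n+1)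
        = (4/27:ℝ) * (fc (n+1) * (4/27:ℝ)^n) := by
      intro n _
      rw [pow_succ]
      ring
    rw [Finset.sum_congr rfl e, ← Finset.mul_sum]
    have h0 : fc 0 * (4/27:ℝ)^0 = 1 := by rw [fc_zero]; norm_num
    rw [h0]
    have h1 : (∑ n ∈ Finset.range N, fd n * (4/27:ℝ)^n)
          * (∑ n ∈ Finset.range N, fc n * (4/27:ℝ)^n)
        ≤ (∑ n ∈ Finset.range N, fc n * (4/27:ℝ)^n)^2
          * (∑ n ∈ Finset.range N, fc n * (4/27:ℝ)^n) :=
      mul_le_mul_of_nonneg_right hd hPnn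
    have h2 : (∑ n ∈ Finset.range N, fc n * (4/27:ℝ)^n)^2
          * (∑ n ∈ Finset.range N, fc n * (4/27:ℝ)^n) ≤ (3/2:ℝ)^2*(3/2) := by
      nlinarith [ih, hPnn]
    nlinarith [hc, h1, h2]

lemma cubic_two_roots (a b x y : ℝ) (ha : a < 0) (hb : b ≠ 0)
    (hx : x^3 + a*x + b = 0) (hy : y^3 + a*y + b = 0)
    (hx2 : |x| < 3/2 * |b/a|) (hy2 : |y| < 3/2 * |b/a|) : x = y := by
  by_contra hne
  have hfact : (x - y)*(x^2 + x*y + y^2 + a) = 0 := by linear_combination hx - hy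
  have hq : x^2 + x*y + y^2 = -a := by
    rcases mul_eq_zero.mp hfact with h | h
    · exact absurd (sub_eq_zero.mp h) hne
    · linarith
  have hbx : b = x*y*(x+y) := by linear_combination hx - x*hq
  have hxne : x ≠ 0 := by
    intro h
    rw [h] at hbx
    simp at hbx
    exact hb hbx
  have hyne : y ≠ 0 := by
    intro h
    rw [h] at hbx
    simp at hbx
    exact hb hbx
  have hna : 0 < -a := neg_pos.mpr ha
  have hbabs : |b| = |x| * |y| * |x+y| := by rw [hbx, abs_mul, abs_mul]
  have hba' : |b/a| = |b|/(-a) := by rw [abs_div, abs_of_neg ha]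
  have hXA : |x| * (-a) < 3/2* |b| := by
    rw [hba', ← mul_div_assoc] at hx2
    exact (lt_div_iff₀ hna).mp hx2
  have hYA : |y| * (-a) < 3/2* |b| := by
    rw [hba', ← mul_div_assoc] at hy2
    exact (lt_div_iff₀ hna).mp hy2
  have hprod : (|x| *(-a)) * (|y| *(-a)) < (3/2* |b|) * (3/2* |b|) :=
    mul_lt_mul'' hXA hYA (by positivity) (by positivity)
  have hmain : |x*y| * a^2 < 9/4 * b^2 := by
    rw [abs_mul]
    calc |x| * |y| * a^2 = (|x| *(-a)) * (|y| *(-a)) := by ring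
      _ < (3/2* |b|) * (3/2* |b|) := hprod
      _ = 9/4 * |b|^2 := by ring
      _ = 9/4 * b^2 := by rw [sq_abs]
  have ha2 : a^2 = (x^2+x*y+y^2)^2 := by
    have : a = -(x^2+x*y+y^2) := by linarith
    rw [this]
    ring
  have hb2 : b^2 = (x*y)^2 * (x+y)^2 := by rw [hbx]; ring
  rw [ha2, hb2] at hmain
  rcases abs_cases (x*y) with ⟨he, hsign⟩ | ⟨he, hsign⟩
  · rw [he] at hmain
    nlinarith [hmain, mul_nonneg hsign
        (mul_nonneg (sq_nonneg (x-y)) (add_nonneg (sq_nonneg x) (sq_nonneg y))),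
      sq_nonneg (x*y*(x-y))]
  · rw [he] at hmain
    have hQ : 0 ≤ (x^2+x*y+y^2)^2 + 9/4*(x*y)*(x+y)^2 := by
      nlinarith [sq_nonneg (x^2+y^2+17/8*(x*y)), sq_nonneg (x*y)]
    have hxyneg : 0 ≤ -(x*y) := by linarith
    nlinarith [hmain, mul_nonneg hxyneg hQ]

/-- For `|4a³/(27b²)| > 1`, the hypergeometric series
`α = (-b/a)·Σ (1/(2n+1))·C(3n,n)·(-b²/a³)ⁿ` converges to a root of
`x³ + ax + b`; if `4a³/(27b²) > 1` this is the unique real root, and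
otherwise it is the unique root with `|b/a| < |α| < (3/2)|b/a|`. -/
theorem hypergeometric_series_trinomial_root (a b : ℝ) (hb : b ≠ 0)
    (hr : |4 * a ^ 3 / (27 * b ^ 2)| > 1) :
    Summable (fun n : ℕ =>
      (1 / (2 * (n : ℝ) + 1)) * (Nat.choose (3 * n) n : ℝ) * (-b ^ 2 / a ^ 3) ^ n) ∧
    let α : ℝ := (-b / a) *
      ∑' n : ℕ, (1 / (2 * (n : ℝ) + 1)) * (Nat.choose (3 * n) n : ℝ) *
        (-b ^ 2 / a ^ 3) ^ n
    α ^ 3 + a * α + b = 0 ∧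
    (4 * a ^ 3 / (27 * b ^ 2) > 1 →
      ∀ x : ℝ, x ^ 3 + a * x + b = 0 → x = α) ∧
    (¬ (4 * a ^ 3 / (27 * b ^ 2) > 1) →
      |b / a| < |α| ∧ |α| < (3 / 2) * |b / a| ∧
      ∀ x : ℝ, x ^ 3 + a * x + b = 0 →
        |b / a| < |x| → |x| < (3 / 2) * |b / a| → x = α) := by
  have key : ∀ n : ℕ, (1 / (2 * (n : ℝ) + 1)) * (Nat.choose (3 * n) n : ℝ) * (-b^2/a^3)^n
      = fc n * (-b^2/a^3)^n := by
    intro n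
    rw [fc]
    ring
  have ha : a ≠ 0 := by
    intro h
    rw [h] at hr
    norm_num at hr
  have hb2 : (0:ℝ) < b^2 := by positivity
  have haabs : (0:ℝ) < |a| := abs_pos.mpr ha
  have h27 : 27*b^2 < 4* |a|^3 := by
    have habs : |4*a^3/(27*b^2)| = 4* |a|^3/(27*b^2) := by
      rw [abs_div, abs_mul, abs_pow, abs_of_pos (show (0:ℝ) < 4 by norm_num),
        abs_of_pos (show (0:ℝ) < 27*b^2 by positivity)]
    rw [habs] at hr
    have := (one_lt_div (show (0:ℝ) < 27*b^2 by positivity)).mp hr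
    linarith
  have ht : |(-b^2/a^3)| < 4/27 := by
    have habs2 : |(-b^2/a^3)| = b^2/|a|^3 := by
      rw [abs_div, abs_neg, abs_of_pos hb2, abs_pow]
    rw [habs2, div_lt_div_iff₀ (by positivity) (by norm_num)]
    linarith
  have hsumnorm := summable_fc_norm ht
  have hsum : Summable (fun n : ℕ => fc n * (-b^2/a^3)^n) := hsumnorm.of_norm
  have hfun : (∑' n : ℕ, fc n * (-b^2/a^3)^n)
      = 1 + (-b^2/a^3) * (∑' n : ℕ, fc n * (-b^2/a^3)^n)^3 := fc_functional ht
  constructor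
  · exact hsum.congr (fun n => (key n).symm)
  intro α
  have hts : (∑' n : ℕ, (1 / (2 * (n : ℝ) + 1)) * (Nat.choose (3 * n) n : ℝ) * (-b^2/a^3)^n)
      = ∑' n : ℕ, fc n * (-b^2/a^3)^n := tsum_congr key
  have hα : α = (-b/a) * ∑' n : ℕ, fc n * (-b^2/a^3)^n := by
    show (-b / a) * ∑' n : ℕ, (1 / (2 * (n : ℝ) + 1)) * (Nat.choose (3 * n) n : ℝ) *
        (-b ^ 2 / a ^ 3) ^ n = _
    rw [hts]
  set F : ℝ := ∑' n : ℕ, fc n * (-b^2/a^3)^n with hFdef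
  have hroot : α ^ 3 + a * α + b = 0 := by
    rw [hα]
    have h1 : ((-b/a) * F)^3 + a*((-b/a)*F) + b
        = -(b^3/a^3)*F^3 - b*F + b := by
      field_simp
      ring
    rw [h1]
    linear_combination (-b) * hfun
  refine ⟨hroot, ?_, ?_⟩
  · -- unique real root when 4a³/(27b²) > 1
    intro hgt x hx
    have h4a : 27*b^2 < 4*a^3 := by
      have := (one_lt_div (show (0:ℝ) < 27*b^2 by positivity)).mp hgt
      linarith
    have hapos : 0 < a := by nlinarith [sq_nonneg a]
    have hfact : (x - α)*(x^2 + x*α + α^2 + a) = 0 := by linear_combination hx - hroot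
    rcases mul_eq_zero.mp hfact with h | h
    · exact sub_eq_zero.mp h
    · exfalso
      nlinarith [sq_nonneg (x+α), sq_nonneg (x-α), hapos]
  · -- otherwise : the annulus case
    intro hng
    have hlt : 4*a^3/(27*b^2) < -1 := by
      rcases lt_abs.mp hr with h | h
      · exact absurd h hng
      · linarith
    have h4a : 4*a^3 < -(27*b^2) := by
      rw [div_lt_iff₀ (show (0:ℝ) < 27*b^2 by positivity)] at hlt
      linarith
    have ha3neg : a^3 < 0 := by nlinarith
    have haneg : a < 0 := by
      by_contra hc
      push_neg at hc
      nlinarith [mul_nonneg hc (mul_nonneg hc hc)]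
    have htpos : (0:ℝ) < -b^2/a^3 := div_pos_iff.mpr (Or.inr ⟨by nlinarith, ha3neg⟩)
    have ht427 : -b^2/a^3 < 4/27 := by
      have h := ht
      rwa [abs_of_pos htpos] at h
    -- lower bound on F
    have hFlow : 1 + (-b^2/a^3) ≤ F := by
      have h2 := Summable.sum_le_tsum (Finset.range 2)
        (fun i _ => le_of_lt (mul_pos (fc_pos i) (pow_pos htpos i))) hsum
      rw [Finset.sum_range_succ, Finset.sum_range_one, fc_zero, fc_one, pow_zero, pow_one,
        one_mul, one_mul] at h2
      exact h2
    have hF1 : 1 < F := by linarith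
    have hFpos : 0 < F := by linarith
    -- upper bound on F
    have hFhigh : F < 3/2 := by
      have hshift : F = 1 + ∑' n : ℕ, fc (n+1) * (-b^2/a^3)^(n+1) := by
        rw [hFdef, hsum.tsum_eq_zero_add, fc_zero, pow_zero, one_mul]
      have htail : (∑' n : ℕ, fc (n+1) * (-b^2/a^3)^(n+1)) ≤ (27*(-b^2/a^3)/4) * (1/2) := by
        apply Real.tsum_le_of_sum_range_le
          (fun n => le_of_lt (mul_pos (fc_pos (n+1)) (pow_pos htpos (n+1))))
        intro N
        calc ∑ n ∈ Finset.range N, fc (n+1) * (-b^2/a^3)^(n+1)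
            ≤ ∑ n ∈ Finset.range N, (27*(-b^2/a^3)/4) * (fc (n+1) * (4/27:ℝ)^(n+1)) := by
              apply Finset.sum_le_sum
              intro n _
              have hp : (-b^2/a^3)^(n+1) ≤ (-b^2/a^3) * (4/27:ℝ)^n := by
                rw [pow_succ']
                apply mul_le_mul_of_nonneg_left _ (le_of_lt htpos)
                exact pow_le_pow_left₀ (le_of_lt htpos) (le_of_lt ht427) n
              have he : (27*(-b^2/a^3)/4) * (fc (n+1) * (4/27:ℝ)^(n+1))
                  = fc (n+1) * ((-b^2/a^3) * (4/27:ℝ)^n) := by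
                rw [pow_succ]
                ring
              rw [he]
              exact mul_le_mul_of_nonneg_left hp (le_of_lt (fc_pos (n+1)))
          _ = (27*(-b^2/a^3)/4) * ∑ n ∈ Finset.range N, fc (n+1) * (4/27:ℝ)^(n+1) := by
              rw [Finset.mul_sum]
          _ ≤ (27*(-b^2/a^3)/4) * (1/2) := by
              apply mul_le_mul_of_nonneg_left _ (by positivity)
              have hp32 := partial32 (N+1)
              rw [Finset.sum_range_succ' (fun n => fc n * (4/27:ℝ)^n) N, fc_zero, pow_zero,
                one_mul] at hp32
              linarith
      have : (27*(-b^2/a^3)/4) * (1/2) < 1/2 := by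
        have : 27*(-b^2/a^3)/4 < 1 := by linarith
        linarith
      linarith [hshift, htail]
    -- |α| = |b/a| * F
    have hbapos : (0:ℝ) < |b/a| := abs_pos.mpr (div_ne_zero hb ha)
    have habsα : |α| = |b/a| * F := by
      rw [hα, abs_mul, abs_of_pos hFpos]
      congr 1
      rw [abs_div, abs_div, abs_neg]
    refine ⟨?_, ?_, ?_⟩
    · rw [habsα]
      calc |b/a| = |b/a| * 1 := by rw [mul_one]
        _ < |b/a| * F := by exact mul_lt_mul_of_pos_left hF1 hbapos
    · rw [habsα]
      calc |b/a| * F < |b/a| * (3/2) := mul_lt_mul_of_pos_left hFhigh hbapos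
        _ = 3/2 * |b/a| := by ring
    · intro x hx hx1 hx2
      apply cubic_two_roots a b x α haneg hb hx hroot hx2
      rw [habsα]
      calc |b/a| * F < |b/a| * (3/2) := mul_lt_mul_of_pos_left hFhigh hbapos
        _ = 3/2 * |b/a| := by ring
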